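/- Let s_1, ..., s_n, s_{n+1} be exchangeable real-valued random variables, and for α ∈ (0,1) let Q_α be the ⌈(1-α)(n+1)⌉-th smallest value of the multiset {s_1, ..., s_n} ∪ {∞}. Then P[s_{n+1} ≤ Q_α] ≥ 1 - α. -/

import Mathlib

open MeasureTheory ProbabilityTheory

/-- The `k`-th smallest element of a finite multiset of extended reals
(i.e. the `k`-th order statistic, 1-indexed). -/
noncomputable def kthSmallest (s : Multiset EReal) (k : ℕ) : EReal :=
  (s.sort (· ≤ ·)).getD (k - 1) ⊤

/-- A finite family of random variables is exchangeable if its joint law is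
invariant under every permutation of the indices. -/
def Exchangeable {Ω : Type*} [MeasureSpace Ω] {m : ℕ} {E : Type*} [MeasurableSpace E]
    (s : Fin m → Ω → E) : Prop :=
  ∀ π : Equiv.Perm (Fin m),
    Measure.map (fun ω i => s (π i) ω) (ℙ : Measure Ω) =
      Measure.map (fun ω i => s i ω) (ℙ : Measure Ω)


open scoped ENNReal


open List in
lemma sorted_le_get_iff {α : Type*} [LinearOrder α] {l : List α} (hl : l.Pairwise (· ≤ ·))
    {i : ℕ} (hi : i < l.length) (t : α) :
    t ≤ l[i] ↔ (l.countP (fun a => decide (a < t))) ≤ i := by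
  constructor
  · intro h
    have hsplit : l = l.take i ++ l.drop i := (List.take_append_drop i l).symm
    have hdrop : (l.drop i).countP (fun a => decide (a < t)) = 0 := by
      rw [List.countP_eq_zero]
      intro a ha
      simp only [decide_eq_true_eq]
      rw [List.mem_iff_getElem] at ha
      obtain ⟨j, hj, rfl⟩ := ha
      simp only [List.length_drop] at hj
      rw [List.getElem_drop]
      have : l[i] ≤ l[i+j]'(by omega) := by
        rcases Nat.eq_or_lt_of_le (Nat.le_add_right i j) with h' | h'
        · simp [← h']
        · have := hl.rel_get_of_lt (a := ⟨i, hi⟩) (b := ⟨i + j, by omega⟩) (by simpa using h')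
          simpa using this
      push_neg
      exact h.trans this
    calc l.countP (fun a => decide (a < t))
        = (l.take i).countP _ + (l.drop i).countP _ := by
          conv_lhs => rw [hsplit]
          rw [List.countP_append]
      _ ≤ i := by rw [hdrop]; simpa using List.countP_le_length.trans (by simp)
  · intro h
    by_contra hlt
    push_neg at hlt
    have htake : ∀ a ∈ l.take (i+1), a < t := by
      intro a ha
      rw [List.mem_iff_getElem] at ha
      obtain ⟨j, hj, rfl⟩ := ha
      rw [List.getElem_take] at *
      have : l[j]'(by simp at hj; omega) ≤ l[i] := by
        simp only [List.length_take] at hj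
        rcases Nat.lt_or_ge j i with h' | h'
        · have := hl.rel_get_of_lt (a := ⟨j, by omega⟩) (b := ⟨i, hi⟩) (by simpa using h')
          simpa using this
        · have : j = i := by omega
          simp [this]
      exact lt_of_le_of_lt this hlt
    have : (l.take (i+1)).countP (fun a => decide (a < t)) = (l.take (i+1)).length := by
      rw [List.countP_eq_length]
      intro a ha; simpa using htake a ha
    have hlen : (l.take (i+1)).length = i + 1 := by simp; omega
    have hle : (l.take (i+1)).countP (fun a => decide (a < t)) ≤ l.countP (fun a => decide (a < t)) :=
      List.Sublist.countP_le (List.take_sublist _ _)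
    omega


lemma le_kthSmallest_iff (m : Multiset EReal) {k : ℕ} (hk1 : 1 ≤ k)
    (hk : k ≤ Multiset.card m) (t : EReal) :
    t ≤ kthSmallest m k ↔ Multiset.countP (fun a => a < t) m < k := by
  set l := m.sort (· ≤ ·) with hl
  have hsorted : l.Pairwise (· ≤ ·) := Multiset.pairwise_sort (s := m) (r := (· ≤ ·))
  have hlen : l.length = Multiset.card m := Multiset.length_sort _
  have hi : k - 1 < l.length := by omega
  have h1 : kthSmallest m k = l[k-1] := List.getD_eq_getElem l ⊤ hi
  have h2 : Multiset.countP (fun a => a < t) m = l.countP (fun a => decide (a < t)) := by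
    conv_lhs => rw [← Multiset.sort_eq (s := m) (r := (· ≤ ·))]
    rw [← hl, Multiset.coe_countP]
  rw [h1, h2, sorted_le_get_iff hsorted hi t]
  omega

lemma countP_special (n : ℕ) (x : Fin (n+1) → ℝ) :
    Multiset.countP (fun a => a < ((x (Fin.last n) : ℝ) : EReal))
      ((Multiset.ofList (List.ofFn fun i : Fin n => ((x i.castSucc : ℝ) : EReal))) + {⊤})
    = (Finset.univ.filter fun i : Fin (n+1) => x i < x (Fin.last n)).card := by
  rw [Multiset.countP_add]
  have htop : Multiset.countP (fun a => a < ((x (Fin.last n) : ℝ) : EReal)) {⊤} = 0 := by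
    rw [Multiset.countP_eq_zero]
    intro a ha
    rw [Multiset.mem_singleton] at ha
    subst ha
    exact not_top_lt
  rw [htop, Nat.add_zero]
  have h1 : (Multiset.ofList (List.ofFn fun i : Fin n => ((x i.castSucc : ℝ) : EReal)))
      = Multiset.map (fun i : Fin n => ((x i.castSucc : ℝ) : EReal)) Finset.univ.val := by
    rw [Fin.univ_val_map]
  rw [h1, Multiset.countP_map]
  have h2 : ∀ (m : ℕ) (p : Fin m → Prop) [DecidablePred p],
      Multiset.card (Multiset.filter (fun a => p a) (Finset.univ : Finset (Fin m)).val)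
        = (Finset.univ.filter p).card := by
    intro m p _
    rw [← Finset.filter_val]
    rfl
  rw [h2]
  have h3 : ∀ i : Fin n, (((x i.castSucc : ℝ) : EReal) < ((x (Fin.last n) : ℝ) : EReal))
      ↔ x i.castSucc < x (Fin.last n) := fun i => EReal.coe_lt_coe_iff
  rw [Finset.card_filter, Finset.card_filter, Fin.sum_univ_castSucc]
  simp [h3]

lemma card_filter_comp_equiv {m : ℕ} (σ : Equiv.Perm (Fin m)) (P : Fin m → Prop)
    [DecidablePred P] :
    (Finset.univ.filter fun q => P (σ q)).card = (Finset.univ.filter P).card := by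
  apply Finset.card_bij (fun q _ => σ q)
  · intro a ha
    simp only [Finset.mem_filter, Finset.mem_univ, true_and] at *
    exact ha
  · intro a _ b _ hab
    exact σ.injective hab
  · intro b hb
    refine ⟨σ.symm b, ?_, by simp⟩
    simp only [Finset.mem_filter, Finset.mem_univ, true_and, Equiv.apply_symm_apply] at *
    exact hb

lemma rank_lemma {m k : ℕ} (hk : k ≤ m) (x : Fin m → ℝ) :
    k ≤ (Finset.univ.filter fun j : Fin m =>
      (Finset.univ.filter fun i => x i < x j).card < k).card := by
  have hcard : k = (Finset.univ : Finset (Fin k)).card := by simp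
  set σ := Tuple.sort x with hσ
  have hmono : Monotone (x ∘ σ) := Tuple.monotone_sort x
  refine le_trans (le_of_eq hcard)
    (Finset.card_le_card_of_injOn (fun j : Fin k => σ (Fin.castLE hk j)) ?_ ?_)
  · intro a _
    simp only [Finset.mem_coe, Finset.mem_filter, Finset.mem_univ, true_and]
    set p : Fin m := Fin.castLE hk a with hp
    have h1 : (Finset.univ.filter fun i => x i < x (σ p)).card
        = (Finset.univ.filter fun q => x (σ q) < x (σ p)).card :=
      (card_filter_comp_equiv σ (fun i => x i < x (σ p))).symm
    have h2 : (Finset.univ.filter fun q => x (σ q) < x (σ p)) ⊆ Finset.Iio p := by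
      intro q hq
      simp only [Finset.mem_filter, Finset.mem_univ, true_and] at hq
      rw [Finset.mem_Iio]
      by_contra hge
      push_neg at hge
      exact absurd (hmono hge) (not_le.mpr hq)
    have h3 : (Finset.Iio p).card = p.val := Fin.card_Iio p
    have h4 : p.val < k := a.isLt
    calc (Finset.univ.filter fun i => x i < x (σ p)).card
        = (Finset.univ.filter fun q => x (σ q) < x (σ p)).card := h1
      _ ≤ (Finset.Iio p).card := Finset.card_le_card h2
      _ < k := by rw [h3]; exact h4
  · intro a _ b _ hab
    exact Fin.castLE_injective hk (σ.injective hab)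


theorem stmt0 {Ω : Type*} [MeasureSpace Ω] [IsProbabilityMeasure (ℙ : Measure Ω)]
    (n : ℕ) (s : Fin (n + 1) → Ω → ℝ) (hmeas : ∀ i, Measurable (s i))
    (hexch : Exchangeable s) (α : ℝ) (hα : α ∈ Set.Ioo (0 : ℝ) 1) :
    ENNReal.ofReal (1 - α) ≤
      ℙ {ω | (s (Fin.last n) ω : EReal) ≤
        kthSmallest
          ((Multiset.ofList (List.ofFn fun i : Fin n => ((s i.castSucc ω : ℝ) : EReal))) + {⊤})
          ⌈(1 - α) * (n + 1)⌉₊} := by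
  classical
  obtain ⟨hα0, hα1⟩ := hα
  set k : ℕ := ⌈(1 - α) * (n + 1)⌉₊ with hk
  have hkpos : 1 ≤ k := by
    rw [hk]
    exact Nat.one_le_iff_ne_zero.mpr (by
      simp only [ne_eq, Nat.ceil_eq_zero, not_le]
      have h1 : (0:ℝ) < 1 - α := by linarith
      positivity)
  have hkle : k ≤ n + 1 := by
    rw [hk]
    apply Nat.ceil_le.mpr
    push_cast
    nlinarith
  -- the count function
  set N : (Fin (n+1) → ℝ) → Fin (n+1) → ℕ :=
    fun x j => (Finset.univ.filter fun i => x i < x j).card with hN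
  -- measurability of N
  have hNmeas : ∀ j, Measurable (fun x => N x j) := by
    intro j
    have : (fun x : Fin (n+1) → ℝ => N x j)
        = fun x => ∑ i : Fin (n+1), if x i < x j then 1 else 0 := by
      funext x
      rw [hN]
      exact Finset.card_filter _ _
    rw [this]
    apply Finset.measurable_sum
    intro i _
    exact Measurable.ite (measurableSet_lt (measurable_pi_apply i) (measurable_pi_apply j))
      measurable_const measurable_const
  set B : Fin (n+1) → Set (Fin (n+1) → ℝ) := fun j => {x | N x j < k} with hB
  have hBmeas : ∀ j, MeasurableSet (B j) := by
    intro j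
    have : B j = (fun x => N x j) ⁻¹' (Set.Iio k) := rfl
    rw [this]
    exact (hNmeas j) MeasurableSet.of_discrete
  set X : Ω → Fin (n+1) → ℝ := fun ω i => s i ω with hX
  have hXmeas : Measurable X := measurable_pi_lambda _ (fun i => hmeas i)
  set E : Fin (n+1) → Set Ω := fun j => X ⁻¹' (B j) with hE
  have hEmeas : ∀ j, MeasurableSet (E j) := fun j => hXmeas (hBmeas j)
  -- Step A: the target set equals E (Fin.last n)
  have hset : {ω | (s (Fin.last n) ω : EReal) ≤
      kthSmallest
        ((Multiset.ofList (List.ofFn fun i : Fin n => ((s i.castSucc ω : ℝ) : EReal))) + {⊤})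
        k} = E (Fin.last n) := by
    ext ω
    simp only [Set.mem_setOf_eq, hE, hB, hX, Set.mem_preimage]
    set m := (Multiset.ofList (List.ofFn fun i : Fin n => ((s i.castSucc ω : ℝ) : EReal))) + {⊤}
      with hm
    have hcard : Multiset.card m = n + 1 := by
      rw [hm]
      simp
    rw [le_kthSmallest_iff m hkpos (hcard ▸ hkle) _]
    rw [hm, countP_special n (fun i => s i ω)]
  rw [hset]
  -- Step B: all E j have the same probability
  have hsame : ∀ j : Fin (n+1), ℙ (E j) = ℙ (E (Fin.last n)) := by
    intro j
    set π : Equiv.Perm (Fin (n+1)) := Equiv.swap j (Fin.last n) with hπ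
    have hXπmeas : Measurable (fun ω i => s (π i) ω) :=
      measurable_pi_lambda _ (fun i => hmeas (π i))
    have h1 := hexch π
    have h2 : (Measure.map (fun ω i => s (π i) ω) (ℙ : Measure Ω)) (B (Fin.last n))
        = (Measure.map X (ℙ : Measure Ω)) (B (Fin.last n)) := by rw [h1]
    rw [Measure.map_apply hXπmeas (hBmeas _), Measure.map_apply hXmeas (hBmeas _)] at h2
    have h3 : (fun ω i => s (π i) ω) ⁻¹' (B (Fin.last n)) = E j := by
      ext ω
      simp only [Set.mem_preimage, hE, hB, Set.mem_setOf_eq, hX]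
      have : N (fun i => s (π i) ω) (Fin.last n) = N (fun i => s i ω) (π (Fin.last n)) := by
        rw [hN]
        exact card_filter_comp_equiv π (fun q => s q ω < s (π (Fin.last n)) ω)
      rw [this, hπ, Equiv.swap_apply_right]
    rw [h3] at h2
    exact h2
  -- Step C: k ≤ (n+1) * ℙ (E last)
  have hsum : (k : ℝ≥0∞) ≤ (n + 1 : ℝ≥0∞) * ℙ (E (Fin.last n)) := by
    have hpt : ∀ ω, (k : ℝ≥0∞) ≤ ∑ j : Fin (n+1), (E j).indicator (fun _ => (1:ℝ≥0∞)) ω := by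
      intro ω
      have hcnt : ∑ j : Fin (n+1), (E j).indicator (fun _ => (1:ℝ≥0∞)) ω
          = ((Finset.univ.filter fun j => ω ∈ E j).card : ℝ≥0∞) := by
        rw [Finset.card_filter]
        push_cast
        apply Finset.sum_congr rfl
        intro j _
        rw [Set.indicator_apply]
      rw [hcnt]
      have := rank_lemma hkle (fun i => s i ω)
      have hmem : ∀ j, (ω ∈ E j) ↔ N (fun i => s i ω) j < k := fun j => Iff.rfl
      have hEq : (Finset.univ.filter fun j => ω ∈ E j)
          = (Finset.univ.filter fun j => (Finset.univ.filter
              fun i => s i ω < s j ω).card < k) := by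
        apply Finset.filter_congr
        intro j _
        simp [hmem j, hN]
      rw [hEq]
      exact_mod_cast this
    have hint : (k : ℝ≥0∞) ≤ ∫⁻ ω, ∑ j : Fin (n+1), (E j).indicator (fun _ => (1:ℝ≥0∞)) ω ∂ℙ := by
      calc (k : ℝ≥0∞) = ∫⁻ _, (k : ℝ≥0∞) ∂(ℙ : Measure Ω) := by
            rw [lintegral_const, measure_univ, mul_one]
        _ ≤ _ := lintegral_mono hpt
    rw [lintegral_finset_sum _ (fun j _ => measurable_const.indicator (hEmeas j))] at hint
    have : ∀ j, ∫⁻ ω, (E j).indicator (fun _ => (1:ℝ≥0∞)) ω ∂ℙ = ℙ (E j) := by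
      intro j
      rw [show (fun _ : Ω => (1:ℝ≥0∞)) = (1 : Ω → ℝ≥0∞) from rfl]
      exact lintegral_indicator_one (hEmeas j)
    simp only [this, hsame] at hint
    rw [Finset.sum_const, Finset.card_univ, Fintype.card_fin, nsmul_eq_mul] at hint
    convert hint using 2
    push_cast
    ring
  -- Step D: conclude
  have hcancel : (n + 1 : ℝ≥0∞) * ENNReal.ofReal (1 - α) ≤ (n + 1 : ℝ≥0∞) * ℙ (E (Fin.last n)) := by
    refine le_trans ?_ hsum
    have h1 : (n + 1 : ℝ≥0∞) = ENNReal.ofReal (n + 1) := by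
      rw [ENNReal.ofReal_add (by positivity) (by norm_num)]
      simp [ENNReal.ofReal_natCast]
    rw [h1, ← ENNReal.ofReal_mul (by positivity)]
    have h2 : (k : ℝ≥0∞) = ENNReal.ofReal (k : ℝ) := (ENNReal.ofReal_natCast k).symm
    rw [h2]
    apply ENNReal.ofReal_le_ofReal
    rw [hk]
    calc ((n:ℝ) + 1) * (1 - α) = (1 - α) * ((n:ℝ) + 1) := by ring
      _ ≤ ⌈(1 - α) * ((n:ℝ) + 1)⌉₊ := Nat.le_ceil _
      _ = (⌈(1 - α) * ((n:ℝ) + 1)⌉₊ : ℝ) := rfl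
  have hne0 : (n + 1 : ℝ≥0∞) ≠ 0 :=
    ne_of_gt (lt_of_lt_of_le zero_lt_one le_add_self)
  have hnetop : (n + 1 : ℝ≥0∞) ≠ ⊤ := by
    simp [ENNReal.add_ne_top]
  exact (ENNReal.mul_le_mul_iff_right hne0 hnetop).mp hcancel
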